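/- Let q > 1 and let E, E₁, E₂ ⊂ ℝⁿ be sets of positive finite measure with E₁ ∪ E₂ ⊂ E and E₁ ∩ E₂ = ∅. Then (|E| D(E)^q + |E₁| D(E₁)^q + |E₂| D(E₂)^q) / (|E| + |E₁ ∪ E₂|) ≥ min over balls B, B₁, B₂ with |B| = |E|, |B₁| = |E₁|, |B₂| = |E₂| of [ (‖χ_B − χ_{B₁} − χ_{B₂}‖_{L¹} − (|B| − |B₁| − |B₂|)) / (|E| + |E₁ ∪ E₂|) ]^q. -/

import Mathlib

open MeasureTheory Metric Set

/-- The Fraenkel asymmetry of a measurable set `E ⊆ ℝⁿ`. -/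
noncomputable def fraenkelAsymmetry {n : ℕ} (E : Set (EuclideanSpace ℝ (Fin n))) : ℝ :=
  sInf {t : ℝ | ∃ (x : EuclideanSpace ℝ (Fin n)) (r : ℝ),
    volume (ball x r) = volume E ∧
    t = (volume (symmDiff E (ball x r))).toReal / (volume E).toReal}


variable {n : ℕ}

lemma integrable_ind (A : Set (EuclideanSpace ℝ (Fin n))) (hA : MeasurableSet A)
    (hfin : volume A < ⊤) :
    Integrable (A.indicator (fun _ => (1:ℝ))) volume := by
  rw [integrable_indicator_iff hA]
  exact integrableOn_const hfin.ne

lemma integral_ind (A : Set (EuclideanSpace ℝ (Fin n))) (hA : MeasurableSet A) :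
    (∫ y, A.indicator (fun _ => (1:ℝ)) y) = (volume A).toReal := by
  rw [integral_indicator_const _ hA]; simp; rfl

lemma abs_ind_sub_ind (A B : Set (EuclideanSpace ℝ (Fin n))) (y : EuclideanSpace ℝ (Fin n)) :
    |A.indicator (fun _ => (1:ℝ)) y - B.indicator (fun _ => (1:ℝ)) y|
      = (symmDiff A B).indicator (fun _ => (1:ℝ)) y := by
  by_cases hA : y ∈ A <;> by_cases hB : y ∈ B <;>
    simp [indicator_apply, hA, hB, Set.mem_symmDiff]

lemma integral_abs_ind_sub_ind (A B : Set (EuclideanSpace ℝ (Fin n)))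
    (hA : MeasurableSet A) (hB : MeasurableSet B) :
    (∫ y, |A.indicator (fun _ => (1:ℝ)) y - B.indicator (fun _ => (1:ℝ)) y|)
      = (volume (symmDiff A B)).toReal := by
  have hs : MeasurableSet (symmDiff A B) := hA.symmDiff hB
  rw [show (fun y => |A.indicator (fun _ => (1:ℝ)) y - B.indicator (fun _ => (1:ℝ)) y|)
      = (symmDiff A B).indicator (fun _ => (1:ℝ)) from funext (abs_ind_sub_ind A B),
    integral_indicator_const _ hs]
  simp; rfl

lemma num_nonneg (x x₁ x₂ : EuclideanSpace ℝ (Fin n)) (r r₁ r₂ : ℝ) :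
    (volume (ball x r)).toReal - (volume (ball x₁ r₁)).toReal - (volume (ball x₂ r₂)).toReal
      ≤ ∫ y, |(ball x r).indicator (fun _ => (1:ℝ)) y -
          (ball x₁ r₁).indicator (fun _ => (1:ℝ)) y -
          (ball x₂ r₂).indicator (fun _ => (1:ℝ)) y| := by
  have hiB := integrable_ind (ball x r) measurableSet_ball measure_ball_lt_top
  have hiB₁ := integrable_ind (ball x₁ r₁) measurableSet_ball measure_ball_lt_top
  have hiB₂ := integrable_ind (ball x₂ r₂) measurableSet_ball measure_ball_lt_top
  have hf := (hiB.sub hiB₁).sub hiB₂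
  have h1 : (∫ y, ((ball x r).indicator (fun _ => (1:ℝ)) y -
      (ball x₁ r₁).indicator (fun _ => (1:ℝ)) y -
      (ball x₂ r₂).indicator (fun _ => (1:ℝ)) y))
      = (volume (ball x r)).toReal - (volume (ball x₁ r₁)).toReal
        - (volume (ball x₂ r₂)).toReal := by
    rw [integral_sub (f := fun y => (ball x r).indicator (fun _ => (1:ℝ)) y -
        (ball x₁ r₁).indicator (fun _ => (1:ℝ)) y) (by exact hiB.sub hiB₁) hiB₂,
      integral_sub hiB hiB₁,
      integral_ind _ measurableSet_ball, integral_ind _ measurableSet_ball,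
      integral_ind _ measurableSet_ball]
  calc (volume (ball x r)).toReal - (volume (ball x₁ r₁)).toReal
        - (volume (ball x₂ r₂)).toReal
      = ∫ y, ((ball x r).indicator (fun _ => (1:ℝ)) y -
          (ball x₁ r₁).indicator (fun _ => (1:ℝ)) y -
          (ball x₂ r₂).indicator (fun _ => (1:ℝ)) y) := h1.symm
    _ ≤ ∫ y, |(ball x r).indicator (fun _ => (1:ℝ)) y -
          (ball x₁ r₁).indicator (fun _ => (1:ℝ)) y -
          (ball x₂ r₂).indicator (fun _ => (1:ℝ)) y| :=
        integral_mono hf hf.abs (fun y => le_abs_self _)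

lemma key_bound {E E₁ E₂ : Set (EuclideanSpace ℝ (Fin n))}
    (hE : MeasurableSet E) (hE₁ : MeasurableSet E₁) (hE₂ : MeasurableSet E₂)
    (hfin : volume E < ⊤) (hfin₁ : volume E₁ < ⊤) (hfin₂ : volume E₂ < ⊤)
    (hsub : E₁ ∪ E₂ ⊆ E) (hdisj : E₁ ∩ E₂ = ∅)
    (x x₁ x₂ : EuclideanSpace ℝ (Fin n)) (r r₁ r₂ : ℝ) :
    (∫ y, |(ball x r).indicator (fun _ => (1:ℝ)) y -
        (ball x₁ r₁).indicator (fun _ => (1:ℝ)) y -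
        (ball x₂ r₂).indicator (fun _ => (1:ℝ)) y|)
      ≤ (volume (symmDiff E (ball x r))).toReal
        + (volume (symmDiff E₁ (ball x₁ r₁))).toReal
        + (volume (symmDiff E₂ (ball x₂ r₂))).toReal
        + ((volume E).toReal - (volume E₁).toReal - (volume E₂).toReal) := by
  have hiB := integrable_ind (ball x r) measurableSet_ball measure_ball_lt_top
  have hiB₁ := integrable_ind (ball x₁ r₁) measurableSet_ball measure_ball_lt_top
  have hiB₂ := integrable_ind (ball x₂ r₂) measurableSet_ball measure_ball_lt_top
  have hiE := integrable_ind E hE hfin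
  have hiE₁ := integrable_ind E₁ hE₁ hfin₁
  have hiE₂ := integrable_ind E₂ hE₂ hfin₂
  set χB := (ball x r).indicator (fun _ => (1:ℝ))
  set χB₁ := (ball x₁ r₁).indicator (fun _ => (1:ℝ))
  set χB₂ := (ball x₂ r₂).indicator (fun _ => (1:ℝ))
  set χE := E.indicator (fun _ => (1:ℝ))
  set χE₁ := E₁.indicator (fun _ => (1:ℝ))
  set χE₂ := E₂.indicator (fun _ => (1:ℝ))
  have hg : ∀ y, 0 ≤ χE y - χE₁ y - χE₂ y := by
    intro y
    by_cases h1 : y ∈ E₁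
    · have hy : y ∈ E := hsub (Or.inl h1)
      have h2 : y ∉ E₂ := fun h => absurd (show y ∈ (∅ : Set _) from hdisj ▸ (⟨h1, h⟩ : y ∈ E₁ ∩ E₂)) (notMem_empty y)
      simp [χE, χE₁, χE₂, indicator_apply, h1, h2, hy]
    · by_cases h2 : y ∈ E₂
      · have hy : y ∈ E := hsub (Or.inr h2)
        simp [χE, χE₁, χE₂, indicator_apply, h1, h2, hy]
      · by_cases hy : y ∈ E <;> simp [χE, χE₁, χE₂, indicator_apply, h1, h2, hy]
  have hpt : ∀ y, |χB y - χB₁ y - χB₂ y|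
      ≤ |χE y - χB y| + |χE₁ y - χB₁ y| + |χE₂ y - χB₂ y| + (χE y - χE₁ y - χE₂ y) := by
    intro y
    have e : χB y - χB₁ y - χB₂ y
        = ((χB y - χE y) + (χE₁ y - χB₁ y) + (χE₂ y - χB₂ y)) + (χE y - χE₁ y - χE₂ y) := by
      ring
    calc |χB y - χB₁ y - χB₂ y|
        ≤ |(χB y - χE y) + (χE₁ y - χB₁ y) + (χE₂ y - χB₂ y)| + |χE y - χE₁ y - χE₂ y| := by
          rw [e]; exact abs_add_le _ _
      _ ≤ (|χB y - χE y| + |χE₁ y - χB₁ y| + |χE₂ y - χB₂ y|) + (χE y - χE₁ y - χE₂ y) := by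
          refine add_le_add ?_ (le_of_eq (abs_of_nonneg (hg y)))
          exact (abs_add_le _ _).trans (add_le_add (abs_add_le _ _) le_rfl)
      _ = |χE y - χB y| + |χE₁ y - χB₁ y| + |χE₂ y - χB₂ y| + (χE y - χE₁ y - χE₂ y) := by
          rw [abs_sub_comm (χB y) (χE y)]
  have i1 : Integrable (fun y => |χE y - χB y|) volume := (hiE.sub hiB).abs
  have i2 : Integrable (fun y => |χE₁ y - χB₁ y|) volume := (hiE₁.sub hiB₁).abs
  have i3 : Integrable (fun y => |χE₂ y - χB₂ y|) volume := (hiE₂.sub hiB₂).abs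
  have i4 : Integrable (fun y => χE y - χE₁ y - χE₂ y) volume := (hiE.sub hiE₁).sub hiE₂
  have ilhs : Integrable (fun y => |χB y - χB₁ y - χB₂ y|) volume := ((hiB.sub hiB₁).sub hiB₂).abs
  have irhs : Integrable (fun y => |χE y - χB y| + |χE₁ y - χB₁ y| + |χE₂ y - χB₂ y|
      + (χE y - χE₁ y - χE₂ y)) volume := ((i1.add i2).add i3).add i4
  have hmono := integral_mono ilhs irhs hpt
  have e4 : (∫ y, (χE y - χE₁ y - χE₂ y))
      = (volume E).toReal - (volume E₁).toReal - (volume E₂).toReal := by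
    rw [integral_sub (f := fun y => χE y - χE₁ y) (by exact hiE.sub hiE₁) hiE₂,
      integral_sub hiE hiE₁, integral_ind _ hE, integral_ind _ hE₁, integral_ind _ hE₂]
  have esum : (∫ y, (|χE y - χB y| + |χE₁ y - χB₁ y| + |χE₂ y - χB₂ y|
      + (χE y - χE₁ y - χE₂ y)))
      = (volume (symmDiff E (ball x r))).toReal
        + (volume (symmDiff E₁ (ball x₁ r₁))).toReal
        + (volume (symmDiff E₂ (ball x₂ r₂))).toReal
        + ((volume E).toReal - (volume E₁).toReal - (volume E₂).toReal) := by
    rw [integral_add (f := fun y => |χE y - χB y| + |χE₁ y - χB₁ y| + |χE₂ y - χB₂ y|)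
        (by exact (i1.add i2).add i3) i4,
      integral_add (f := fun y => |χE y - χB y| + |χE₁ y - χB₁ y|) (by exact i1.add i2) i3,
      integral_add i1 i2, e4,
      integral_abs_ind_sub_ind E (ball x r) hE measurableSet_ball,
      integral_abs_ind_sub_ind E₁ (ball x₁ r₁) hE₁ measurableSet_ball,
      integral_abs_ind_sub_ind E₂ (ball x₂ r₂) hE₂ measurableSet_ball]
  rw [esum] at hmono
  exact hmono

lemma exists_ball_volume {n : ℕ} (hn : 1 ≤ n) (v : ENNReal) (h0 : 0 < v) (hf : v < ⊤) :
    ∃ r : ℝ, volume (ball (0 : EuclideanSpace ℝ (Fin n)) r) = v := by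
  haveI : Nonempty (Fin n) := ⟨⟨0, hn⟩⟩
  set c : ℝ := Real.sqrt Real.pi ^ n / Real.Gamma (n / 2 + 1) with hc
  have hcpos : 0 < c := by
    apply div_pos (pow_pos (Real.sqrt_pos.2 Real.pi_pos) n)
    exact Real.Gamma_pos_of_pos (by positivity)
  have hv : 0 < v.toReal := ENNReal.toReal_pos h0.ne' hf.ne
  refine ⟨(v.toReal / c) ^ ((n : ℝ)⁻¹), ?_⟩
  rw [EuclideanSpace.volume_ball]
  have hr : (0:ℝ) < (v.toReal / c) ^ ((n : ℝ)⁻¹) := Real.rpow_pos_of_pos (by positivity) _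
  have hpow : ((v.toReal / c) ^ ((n : ℝ)⁻¹)) ^ (n : ℕ) = v.toReal / c := by
    rw [← Real.rpow_natCast ((v.toReal / c) ^ ((n : ℝ)⁻¹)) n, ← Real.rpow_mul (by positivity),
      inv_mul_cancel₀ (by exact_mod_cast Nat.pos_of_ne_zero (by omega) |>.ne'), Real.rpow_one]
  rw [Fintype.card_fin, ← ENNReal.ofReal_pow hr.le, hpow, ← ENNReal.ofReal_mul (by positivity)]
  rw [div_mul_cancel₀ _ hcpos.ne']
  exact ENNReal.ofReal_toReal hf.ne

lemma fraenkel_nonneg {n : ℕ} (E : Set (EuclideanSpace ℝ (Fin n))) :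
    0 ≤ fraenkelAsymmetry E := by
  apply Real.sInf_nonneg
  rintro t ⟨x, r, -, rfl⟩
  positivity

lemma exists_near {n : ℕ} (hn : 1 ≤ n) (E : Set (EuclideanSpace ℝ (Fin n)))
    (h0 : 0 < volume E) (hfin : volume E < ⊤) {ε : ℝ} (hε : 0 < ε) :
    ∃ (x : EuclideanSpace ℝ (Fin n)) (r : ℝ), volume (ball x r) = volume E ∧
      (volume (symmDiff E (ball x r))).toReal
        < (volume E).toReal * fraenkelAsymmetry E + ε := by
  have ha : 0 < (volume E).toReal := ENNReal.toReal_pos h0.ne' hfin.ne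
  set S := {t : ℝ | ∃ (x : EuclideanSpace ℝ (Fin n)) (r : ℝ),
    volume (ball x r) = volume E ∧
    t = (volume (symmDiff E (ball x r))).toReal / (volume E).toReal} with hS
  have hne : S.Nonempty := by
    obtain ⟨r, hr⟩ := exists_ball_volume hn (volume E) h0 hfin
    exact ⟨_, 0, r, hr, rfl⟩
  have hbdd : BddBelow S := ⟨0, by rintro t ⟨x, r, -, rfl⟩; positivity⟩
  have hlt : sInf S < fraenkelAsymmetry E + ε / (volume E).toReal := by
    have : 0 < ε / (volume E).toReal := by positivity
    unfold fraenkelAsymmetry; linarith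
  obtain ⟨t, ⟨x, r, hvol, rfl⟩, ht⟩ := (csInf_lt_iff hbdd hne).1 hlt
  refine ⟨x, r, hvol, ?_⟩
  have := (div_lt_iff₀ ha).1 ht
  calc (volume (symmDiff E (ball x r))).toReal
      < (fraenkelAsymmetry E + ε / (volume E).toReal) * (volume E).toReal := this
    _ = (volume E).toReal * fraenkelAsymmetry E + ε := by field_simp

/-- Let `q > 1` and let `E, E₁, E₂ ⊆ ℝⁿ` be sets of positive finite measure with
`E₁ ∪ E₂ ⊆ E` and `E₁ ∩ E₂ = ∅`.  Then
`(|E| D(E)^q + |E₁| D(E₁)^q + |E₂| D(E₂)^q) / (|E| + |E₁ ∪ E₂|)` is at least the infimum,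
over balls `B, B₁, B₂` with `|B| = |E|`, `|B₁| = |E₁|`, `|B₂| = |E₂|`, of
`[(‖χ_B − χ_{B₁} − χ_{B₂}‖_{L¹} − (|B| − |B₁| − |B₂|)) / (|E| + |E₁ ∪ E₂|)]^q`. -/
theorem fraenkel_three_sets_lower_bound {n : ℕ} (hn : 1 ≤ n) (q : ℝ) (hq : 1 < q)
    (E E₁ E₂ : Set (EuclideanSpace ℝ (Fin n)))
    (hE : MeasurableSet E) (hE₁ : MeasurableSet E₁) (hE₂ : MeasurableSet E₂)
    (h0 : 0 < volume E) (hfin : volume E < ⊤)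
    (h0₁ : 0 < volume E₁) (hfin₁ : volume E₁ < ⊤)
    (h0₂ : 0 < volume E₂) (hfin₂ : volume E₂ < ⊤)
    (hsub : E₁ ∪ E₂ ⊆ E) (hdisj : E₁ ∩ E₂ = ∅) :
    ((volume E).toReal * fraenkelAsymmetry E ^ q +
        (volume E₁).toReal * fraenkelAsymmetry E₁ ^ q +
        (volume E₂).toReal * fraenkelAsymmetry E₂ ^ q) /
      ((volume E).toReal + (volume (E₁ ∪ E₂)).toReal) ≥
    sInf {t : ℝ | ∃ (x x₁ x₂ : EuclideanSpace ℝ (Fin n)) (r r₁ r₂ : ℝ),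
      volume (ball x r) = volume E ∧ volume (ball x₁ r₁) = volume E₁ ∧
      volume (ball x₂ r₂) = volume E₂ ∧
      t = (((∫ y, |(ball x r).indicator (fun _ => (1 : ℝ)) y -
              (ball x₁ r₁).indicator (fun _ => (1 : ℝ)) y -
              (ball x₂ r₂).indicator (fun _ => (1 : ℝ)) y|) -
            ((volume (ball x r)).toReal - (volume (ball x₁ r₁)).toReal -
              (volume (ball x₂ r₂)).toReal)) /
          ((volume E).toReal + (volume (E₁ ∪ E₂)).toReal)) ^ q} := by
  set a := (volume E).toReal with ha
  set a₁ := (volume E₁).toReal with ha₁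
  set a₂ := (volume E₂).toReal with ha₂
  have hdisj' : Disjoint E₁ E₂ := Set.disjoint_iff_inter_eq_empty.2 hdisj
  have hU : (volume (E₁ ∪ E₂)).toReal = a₁ + a₂ := by
    rw [measure_union hdisj' hE₂, ENNReal.toReal_add hfin₁.ne hfin₂.ne]
  have hapos : 0 < a := ENNReal.toReal_pos h0.ne' hfin.ne
  have hapos₁ : 0 < a₁ := ENNReal.toReal_pos h0₁.ne' hfin₁.ne
  have hapos₂ : 0 < a₂ := ENNReal.toReal_pos h0₂.ne' hfin₂.ne
  set M := a + (volume (E₁ ∪ E₂)).toReal with hMdef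
  have hM : M = a + a₁ + a₂ := by rw [hMdef, hU]; ring
  have hMpos : 0 < M := by rw [hM]; linarith
  set D := fraenkelAsymmetry E with hD
  set D₁ := fraenkelAsymmetry E₁ with hD₁
  set D₂ := fraenkelAsymmetry E₂ with hD₂
  have hDn : 0 ≤ D := fraenkel_nonneg E
  have hDn₁ : 0 ≤ D₁ := fraenkel_nonneg E₁
  have hDn₂ : 0 ≤ D₂ := fraenkel_nonneg E₂
  set T := {t : ℝ | ∃ (x x₁ x₂ : EuclideanSpace ℝ (Fin n)) (r r₁ r₂ : ℝ),
      volume (ball x r) = volume E ∧ volume (ball x₁ r₁) = volume E₁ ∧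
      volume (ball x₂ r₂) = volume E₂ ∧
      t = (((∫ y, |(ball x r).indicator (fun _ => (1 : ℝ)) y -
              (ball x₁ r₁).indicator (fun _ => (1 : ℝ)) y -
              (ball x₂ r₂).indicator (fun _ => (1 : ℝ)) y|) -
            ((volume (ball x r)).toReal - (volume (ball x₁ r₁)).toReal -
              (volume (ball x₂ r₂)).toReal)) / M) ^ q} with hT
  have hbddT : BddBelow T := by
    refine ⟨0, ?_⟩
    rintro t ⟨x, x₁, x₂, r, r₁, r₂, hv, hv₁, hv₂, rfl⟩
    apply Real.rpow_nonneg
    apply div_nonneg _ hMpos.le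
    exact sub_nonneg.2 (num_nonneg x x₁ x₂ r r₁ r₂)
  set c := (a * D + a₁ * D₁ + a₂ * D₂) / M with hc
  have hcn : 0 ≤ c := by
    apply div_nonneg _ hMpos.le
    have := mul_nonneg hapos.le hDn
    have := mul_nonneg hapos₁.le hDn₁
    have := mul_nonneg hapos₂.le hDn₂
    linarith
  have hstep : ∀ ε : ℝ, 0 < ε → sInf T ≤ (c + ε) ^ q := by
    intro ε hε
    have hδ : 0 < ε * M / 3 := by positivity
    obtain ⟨x, r, hv, hb⟩ := exists_near hn E h0 hfin hδ
    obtain ⟨x₁, r₁, hv₁, hb₁⟩ := exists_near hn E₁ h0₁ hfin₁ hδ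
    obtain ⟨x₂, r₂, hv₂, hb₂⟩ := exists_near hn E₂ h0₂ hfin₂ hδ
    set num := (∫ y, |(ball x r).indicator (fun _ => (1 : ℝ)) y -
              (ball x₁ r₁).indicator (fun _ => (1 : ℝ)) y -
              (ball x₂ r₂).indicator (fun _ => (1 : ℝ)) y|) -
            ((volume (ball x r)).toReal - (volume (ball x₁ r₁)).toReal -
              (volume (ball x₂ r₂)).toReal) with hnum
    have hmem : (num / M) ^ q ∈ T := ⟨x, x₁, x₂, r, r₁, r₂, hv, hv₁, hv₂, rfl⟩
    have hnn : 0 ≤ num := sub_nonneg.2 (num_nonneg x x₁ x₂ r r₁ r₂)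
    have hkey := key_bound hE hE₁ hE₂ hfin hfin₁ hfin₂ hsub hdisj x x₁ x₂ r r₁ r₂
    have hnumle : num ≤ (c + ε) * M := by
      have hv' : (volume (ball x r)).toReal = a := by rw [hv]
      have hv₁' : (volume (ball x₁ r₁)).toReal = a₁ := by rw [hv₁]
      have hv₂' : (volume (ball x₂ r₂)).toReal = a₂ := by rw [hv₂]
      have hcM : c * M = a * D + a₁ * D₁ + a₂ * D₂ := by
        rw [hc, div_mul_cancel₀ _ hMpos.ne']
      have : num ≤ (volume (symmDiff E (ball x r))).toReal
          + (volume (symmDiff E₁ (ball x₁ r₁))).toReal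
          + (volume (symmDiff E₂ (ball x₂ r₂))).toReal := by
        rw [hnum, hv', hv₁', hv₂']
        linarith
      calc num ≤ _ := this
        _ ≤ (a * D + ε * M / 3) + (a₁ * D₁ + ε * M / 3) + (a₂ * D₂ + ε * M / 3) := by
            exact add_le_add (add_le_add hb.le hb₁.le) hb₂.le
        _ = c * M + ε * M := by rw [hcM]; ring
        _ = (c + ε) * M := by ring
    have hdivle : num / M ≤ c + ε := (div_le_iff₀ hMpos).2 hnumle
    calc sInf T ≤ (num / M) ^ q := csInf_le hbddT hmem
      _ ≤ (c + ε) ^ q := Real.rpow_le_rpow (div_nonneg hnn hMpos.le) hdivle (by linarith)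
  have hle : sInf T ≤ c ^ q := by
    have hcont : ContinuousAt (fun s : ℝ => s ^ q) c :=
      Real.continuousAt_rpow_const c q (Or.inr (by linarith))
    have h1 : Filter.Tendsto (fun ε : ℝ => c + ε) (nhdsWithin 0 (Ioi 0)) (nhds c) := by
      have h2 : Filter.Tendsto (fun ε : ℝ => c + ε) (nhds 0) (nhds (c + 0)) :=
        tendsto_const_nhds.add Filter.tendsto_id
      rw [add_zero] at h2
      exact h2.mono_left nhdsWithin_le_nhds
    have htends : Filter.Tendsto (fun ε : ℝ => (c + ε) ^ q) (nhdsWithin 0 (Ioi 0))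
        (nhds (c ^ q)) := hcont.tendsto.comp h1
    exact ge_of_tendsto htends (by
      filter_upwards [self_mem_nhdsWithin] with ε hε
      exact hstep ε hε)
  have hjensen : c ^ q ≤ (a * D ^ q + a₁ * D₁ ^ q + a₂ * D₂ ^ q) / M := by
    have hsum : ∑ i : Fin 3, (![a / M, a₁ / M, a₂ / M]) i = 1 := by
      rw [Fin.sum_univ_three]
      simp only [Matrix.cons_val_zero, Matrix.cons_val_one, Matrix.head_cons,
        Matrix.cons_val_two, Matrix.tail_cons]
      rw [← add_div, ← add_div, hM, div_self (by rw [← hM]; exact hMpos.ne')]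
    have hw : ∀ i ∈ Finset.univ, 0 ≤ (![a / M, a₁ / M, a₂ / M]) i := by
      intro i _
      fin_cases i <;> simp <;> positivity
    have hz : ∀ i ∈ Finset.univ, 0 ≤ (![D, D₁, D₂]) i := by
      intro i _
      fin_cases i <;> simpa
    have := Real.rpow_arith_mean_le_arith_mean_rpow Finset.univ
      (![a / M, a₁ / M, a₂ / M]) (![D, D₁, D₂]) hw hsum hz hq.le
    simp only [Fin.sum_univ_three] at this
    simp only [Matrix.cons_val_zero, Matrix.cons_val_one, Matrix.head_cons,
      Matrix.cons_val_two, Matrix.tail_cons] at this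
    calc c ^ q = (a / M * D + a₁ / M * D₁ + a₂ / M * D₂) ^ q := by
          rw [hc]; ring_nf
      _ ≤ a / M * D ^ q + a₁ / M * D₁ ^ q + a₂ / M * D₂ ^ q := this
      _ = (a * D ^ q + a₁ * D₁ ^ q + a₂ * D₂ ^ q) / M := by ring
  exact le_trans hle hjensen
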